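/- Let A be a Banach algebra. If A** (with the first Arens product) has a left unit element e'' that belongs to the left weak topological center Z̃₁ℓ(A**), then A is a reflexive Banach space. -/

import Mathlib

open NormedSpace Filter Topology

noncomputable section

/-- The topological dual of a seminormed space `E` (the former Mathlib `NormedSpace.Dual`). -/
abbrev NormedSpace.Dual (𝕜 : Type*) [NontriviallyNormedField 𝕜] (E : Type*)
    [SeminormedAddCommGroup E] [NormedSpace 𝕜 E] : Type _ := E →L[𝕜] 𝕜

/-- The Arens adjoint of a bounded bilinear map `m : X × Y → Z`:
`⟨adjB m z' x, y⟩ = ⟨z', m x y⟩`. -/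
def adjB {X Y Z : Type*} [NormedAddCommGroup X] [NormedSpace ℂ X]
    [NormedAddCommGroup Y] [NormedSpace ℂ Y] [NormedAddCommGroup Z] [NormedSpace ℂ Z]
    (m : X →L[ℂ] Y →L[ℂ] Z) : Dual ℂ Z →L[ℂ] X →L[ℂ] Dual ℂ Y :=
  ((ContinuousLinearMap.compL ℂ X (Y →L[ℂ] Z) (Y →L[ℂ] ℂ)).flip m).comp
    (ContinuousLinearMap.compL ℂ Y Z ℂ)

variable (A : Type*) [NonUnitalNormedRing A] [NormedSpace ℂ A]
  [SMulCommClass ℂ A A] [IsScalarTower ℂ A A] [CompleteSpace A]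

/-- The first Arens product on the bidual `A**`, obtained by the usual three-step
construction: `(a'·a)(b) = a'(ab)`, `(a''·a')(a) = a''(a'·a)`, `(a''b'')(a') = a''(b''·a')`. -/
def arens : Dual ℂ (Dual ℂ A) →L[ℂ] Dual ℂ (Dual ℂ A) →L[ℂ] Dual ℂ (Dual ℂ A) :=
  adjB (adjB (adjB (ContinuousLinearMap.mul ℂ A)))

/-- The left weak topological center `Z̃₁ℓ(A**)`:
those `a''` for which `b'' ↦ a''b''` is weak*-to-weak continuous on `A**`. -/
def wkCenterL : Set (Dual ℂ (Dual ℂ A)) :=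
  {a'' | Continuous fun b'' : WeakDual ℂ (Dual ℂ A) =>
      (arens A a'' b'' : WeakSpace ℂ (Dual ℂ (Dual ℂ A)))}

/-- The right weak topological center `Z̃₁ʳ(A**)`:
those `a''` for which `b'' ↦ b''a''` is weak*-to-weak continuous on `A**`. -/
def wkCenterR : Set (Dual ℂ (Dual ℂ A)) :=
  {a'' | Continuous fun b'' : WeakDual ℂ (Dual ℂ A) =>
      (arens A b'' a'' : WeakSpace ℂ (Dual ℂ (Dual ℂ A)))}

/-- The topological center `Z₁(A**)`:
those `a''` for which `b'' ↦ a''b''` is weak*-to-weak* continuous on `A**`. -/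
def topCenterL : Set (Dual ℂ (Dual ℂ A)) :=
  {a'' | Continuous fun b'' : WeakDual ℂ (Dual ℂ A) =>
      (arens A a'' b'' : WeakDual ℂ (Dual ℂ A))}

/-- A linear functional on a dual space that is continuous for the weak-* topology
is the evaluation at some point. -/
theorem weakDualContinuous_exists_eval {E : Type*} [NormedAddCommGroup E] [NormedSpace ℂ E]
    (Φ : Dual ℂ (Dual ℂ E)) (hΦ : Continuous fun x : WeakDual ℂ E => Φ x) :
    ∃ y : E, ∀ x : Dual ℂ E, Φ x = x y := by
  have hnb : (fun x : WeakDual ℂ E => Φ x) ⁻¹' Metric.ball 0 1 ∈ 𝓝 (0 : WeakDual ℂ E) := by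
    have := hΦ.continuousAt (x := (0 : WeakDual ℂ E))
    apply this.preimage_mem_nhds
    convert Metric.ball_mem_nhds (0 : ℂ) one_pos using 2
    exact map_zero Φ
  obtain ⟨U, hU, hUsub⟩ :=
    ((LinearMap.hasBasis_weakBilin (topDualPairing ℂ E)).mem_iff).mp hnb
  obtain ⟨s, r, hr, rfl⟩ := (SeminormFamily.basisSets_iff _).mp hU
  set p := (topDualPairing ℂ E).toSeminormFamily with hp
  -- the finitely many evaluation functionals
  set L : s → (Dual ℂ E) →ₗ[ℂ] ℂ := fun i => (topDualPairing ℂ E).flip (i : E) with hL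
  have hker : ⨅ i : s, LinearMap.ker (L i) ≤ LinearMap.ker (Φ : (Dual ℂ E) →ₗ[ℂ] ℂ) := by
    intro x hx
    have hx0 : ∀ i : s, x (i : E) = 0 := by
      intro i
      have := (Submodule.mem_iInf _).mp hx i
      simpa [hL, LinearMap.mem_ker] using this
    have key : ∀ c : ℂ, ‖c‖ * ‖Φ x‖ < 1 := by
      intro c
      have hmem : (c • x : WeakDual ℂ E) ∈ Seminorm.ball (s.sup p) 0 r := by
        rw [Seminorm.mem_ball_zero]
        refine Seminorm.finset_sup_apply_lt hr ?_
        intro i hi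
        have : p i (c • x) = ‖c • (x i)‖ := by
          simp [hp, LinearMap.toSeminormFamily_apply, topDualPairing_apply]
        rw [this, hx0 ⟨i, hi⟩]
        simpa using hr
      have := hUsub hmem
      replace this : ‖Φ (c • x)‖ < 1 := mem_ball_zero_iff.mp this
      calc ‖c‖ * ‖Φ x‖ = ‖Φ (c • x)‖ := by rw [map_smul]; simp [norm_smul]
        _ < 1 := this
    rw [LinearMap.mem_ker]
    by_contra hne
    have hΦx : ‖Φ x‖ ≠ 0 := by simpa [norm_eq_zero] using hne
    have hpos : (0:ℝ) < ‖Φ x‖ := lt_of_le_of_ne (norm_nonneg _) (Ne.symm hΦx)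
    have := key ((2 * ‖Φ x‖⁻¹ : ℝ) : ℂ)
    rw [Complex.norm_real] at this
    have h2 : ‖(2 * ‖Φ x‖⁻¹ : ℝ)‖ * ‖Φ x‖ = 2 := by
      rw [Real.norm_of_nonneg (by positivity)]
      rw [mul_assoc, inv_mul_cancel₀ hΦx, mul_one]
    rw [h2] at this
    norm_num at this
  have hspan := mem_span_of_iInf_ker_le_ker (𝕜 := ℂ) hker
  obtain ⟨c, hc⟩ := (Submodule.mem_span_range_iff_exists_fun ℂ).mp hspan
  refine ⟨∑ i : s, c i • (i : E), fun x => ?_⟩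
  have := congrArg (fun f : (Dual ℂ E) →ₗ[ℂ] ℂ => f x) hc
  simp only [LinearMap.coe_sum, Finset.sum_apply, LinearMap.smul_apply,
    ContinuousLinearMap.coe_coe] at this
  rw [← this, map_sum]
  congr 1
  ext i
  simp [hL, topDualPairing_apply, map_smul, smul_eq_mul]

/-- if `A**` (first Arens product) has a left unit belonging to `Z̃₁ℓ(A**)`,
then `A` is reflexive (the canonical embedding `A → A**` is surjective). -/
theorem stmt15
    (h : ∃ e'' : Dual ℂ (Dual ℂ A),
      (∀ a'' : Dual ℂ (Dual ℂ A), arens A e'' a'' = a'') ∧ e'' ∈ wkCenterL A) :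
    Function.Surjective (inclusionInDoubleDual ℂ A) := by
  obtain ⟨e'', hleft, hcent⟩ := h
  have hcent' := hcent
  rw [wkCenterL, Set.mem_setOf_eq] at hcent'
  -- hence every element of A*** is weak-* continuous on A**
  have hwk : ∀ Φ : Dual ℂ (Dual ℂ (Dual ℂ A)),
      Continuous fun x : WeakDual ℂ (Dual ℂ A) => Φ x := by
    intro Φ
    have h1 : Continuous fun b'' : WeakDual ℂ (Dual ℂ A) => Φ (arens A e'' b'') :=
      Φ.continuous.comp hcent'
    exact h1.congr fun b'' => by
      show Φ (arens A e'' b'') = Φ b''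
      rw [hleft b'']
  -- the range of the canonical embedding is a closed subspace
  set S : Submodule ℂ (Dual ℂ (Dual ℂ A)) :=
    LinearMap.range (inclusionInDoubleDualLi ℂ (E := A)).toLinearMap with hS
  have hSclosed : IsClosed (S : Set (Dual ℂ (Dual ℂ A))) := by
    have h2 : (S : Set (Dual ℂ (Dual ℂ A)))
        = Set.range (inclusionInDoubleDualLi ℂ (E := A)) := by
      ext x
      simp [hS, LinearMap.mem_range, Set.mem_range]
    rw [h2]
    exact ((inclusionInDoubleDualLi ℂ
      (E := A)).isometry.isUniformEmbedding.toIsUniformInducing.isComplete_range).isClosed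
  intro a''
  by_contra hmem'
  have hmem : a'' ∉ S := by
    intro hx
    obtain ⟨a, ha⟩ := hx
    exact hmem' ⟨a, ha⟩
  haveI : IsClosed (S : Set (Dual ℂ (Dual ℂ A))) := hSclosed
  -- the quotient by the closed range
  have hq0 : (Submodule.Quotient.mk a'' : (Dual ℂ (Dual ℂ A)) ⧸ S) ≠ 0 := by
    simpa [Submodule.Quotient.mk_eq_zero] using hmem
  obtain ⟨g, hg1, hg2⟩ := exists_dual_vector ℂ (Submodule.Quotient.mk a'' : (Dual ℂ (Dual ℂ A)) ⧸ S)
    (fun h => hq0 ((norm_eq_zero (E := (Dual ℂ (Dual ℂ A)) ⧸ S)).mp h))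
  -- quotient map as a continuous linear map
  let q : Dual ℂ (Dual ℂ A) →L[ℂ] ((Dual ℂ (Dual ℂ A)) ⧸ S) :=
    LinearMap.mkContinuous (E := Dual ℂ (Dual ℂ A)) (F := (Dual ℂ (Dual ℂ A)) ⧸ S) S.mkQ 1 fun x => by
      simpa [one_mul] using Submodule.Quotient.norm_mk_le S x
  let Φ : Dual ℂ (Dual ℂ (Dual ℂ A)) := g.comp q
  obtain ⟨a', ha'⟩ := weakDualContinuous_exists_eval Φ (hwk Φ)
  have ha'0 : a' = 0 := by
    ext a
    have h1 : Φ (inclusionInDoubleDual ℂ A a) = 0 := by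
      have hz : (Submodule.Quotient.mk (inclusionInDoubleDual ℂ A a)
          : (Dual ℂ (Dual ℂ A)) ⧸ S) = 0 := by
        rw [Submodule.Quotient.mk_eq_zero]
        exact ⟨a, rfl⟩
      show g (q (inclusionInDoubleDual ℂ A a)) = 0
      have hq : q (inclusionInDoubleDual ℂ A a)
          = Submodule.Quotient.mk (inclusionInDoubleDual ℂ A a) := rfl
      rw [hq, hz, map_zero]
    have h2 : Φ (inclusionInDoubleDual ℂ A a) = a' a := by
      rw [ha' (inclusionInDoubleDual ℂ A a)]
      rfl
    rw [h1] at h2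
    simpa using h2.symm
  have hΦa : Φ a'' = 0 := by
    rw [ha' a'', ha'0, ContinuousLinearMap.map_zero]
  have hgz : g (Submodule.Quotient.mk a'') = 0 := hΦa
  rw [hg2] at hgz
  rw [RCLike.ofReal_eq_zero] at hgz
  exact hq0 ((norm_eq_zero (E := (Dual ℂ (Dual ℂ A)) ⧸ S)).mp hgz)


end
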